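/- arXiv:1509.03883 — 3 statements merged into one kernel-verified Lean document; each statement's English description precedes it below -/
import Mathlib

section
/- For any nonzero field elements a1,a2,b1,b2,c1,c2, the determinant of the 3×3 matrix with rows M = (-a1*a2*b1^2*c1, a2^2*b2^2*c2 + a1*a2*b1*b2*c1, -a1^2*b1^2*c1), O = (0, a1^2*b1^2*c1^2 + a2^2*b2^2*c2^2 + a1*a2*b1*b2*c1*c2, a1^2*b1^2*c1*c2), and Q = (a2^2*b1*b2*c2^2, a1^2*b1^2*c1^2 + 2*a1*a2*b1*b2*c1*c2 + a2^2*b2^2*c2^2, a1^2*b1^2*c1*c2 + 2*a1*a2*b1*b2*c2^2) vanishes. -/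
theorem MOQ_collinear {K : Type*} [Field K] (a1 a2 b1 b2 c1 c2 : K)
    (ha1 : a1 ≠ 0) (ha2 : a2 ≠ 0) (hb1 : b1 ≠ 0) (hb2 : b2 ≠ 0)
    (hc1 : c1 ≠ 0) (hc2 : c2 ≠ 0) :
    Matrix.det !![-a1*a2*b1^2*c1, a2^2*b2^2*c2 + a1*a2*b1*b2*c1, -a1^2*b1^2*c1;
                  0, a1^2*b1^2*c1^2 + a2^2*b2^2*c2^2 + a1*a2*b1*b2*c1*c2, a1^2*b1^2*c1*c2;
                  a2^2*b1*b2*c2^2, a1^2*b1^2*c1^2 + 2*a1*a2*b1*b2*c1*c2 + a2^2*b2^2*c2^2,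
                    a1^2*b1^2*c1*c2 + 2*a1*a2*b1*b2*c2^2] = 0 := by
  simp [Matrix.det_fin_three]; ring
end

section
/- Let a1,a2,b1,b2,c1,c2 be nonzero field elements. If a1*b1*c1 + 2*a2*b2*c2 = 0, then the points E = (b1:b2:0), Q = (a2^2*b1*b2*c2^2 : a1^2*b1^2*c1^2 + 2*a1*a2*b1*b2*c1*c2 + a2^2*b2^2*c2^2 : a1^2*b1^2*c1*c2 + 2*a1*a2*b1*b2*c2^2), R = (a1*a2*b1^2*c1 + a2^2*b1*b2*c2 : -a2^2*b2^2*c2 : a1^2*b1^2*c1 + 2*a1*a2*b1*b2*c2), and S = (a1*b1^2*c1 + a2*b1*b2*c2 : -a2*b2^2*c2 : 0) all coincide as points of P^2 (their coordinate vectors are pairwise proportional by nonzero scalars). -/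
theorem degeneration_iii_EQRS_coincide {K : Type*} [Field K] (a1 a2 b1 b2 c1 c2 : K)
    (ha1 : a1 ≠ 0) (ha2 : a2 ≠ 0) (hb1 : b1 ≠ 0) (hb2 : b2 ≠ 0)
    (hc1 : c1 ≠ 0) (hc2 : c2 ≠ 0)
    (hdeg : a1*b1*c1 + 2*a2*b2*c2 = 0) :
    (∃ q : K, q ≠ 0 ∧
      (a2^2*b1*b2*c2^2,
       a1^2*b1^2*c1^2 + 2*a1*a2*b1*b2*c1*c2 + a2^2*b2^2*c2^2,
       a1^2*b1^2*c1*c2 + 2*a1*a2*b1*b2*c2^2) = (q*b1, q*b2, q*0)) ∧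
    (∃ r : K, r ≠ 0 ∧
      (a1*a2*b1^2*c1 + a2^2*b1*b2*c2, -a2^2*b2^2*c2,
       a1^2*b1^2*c1 + 2*a1*a2*b1*b2*c2) = (r*b1, r*b2, r*0)) ∧
    (∃ s : K, s ≠ 0 ∧
      (a1*b1^2*c1 + a2*b1*b2*c2, -a2*b2^2*c2, (0:K)) = (s*b1, s*b2, s*0)) := by
  refine ⟨⟨a2^2*b2*c2^2, by simp [ha2, hb2, hc2], ?_⟩,
          ⟨-(a2^2*b2*c2), by simp [ha2, hb2, hc2], ?_⟩,
          ⟨-(a2*b2*c2), by simp [ha2, hb2, hc2], ?_⟩⟩ <;>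
    simp only [Prod.mk.injEq]
  · exact ⟨by ring, by linear_combination (a1*b1*c1) * hdeg,
      by linear_combination (a1*b1*c2) * hdeg⟩
  · exact ⟨by linear_combination (a2*b1) * hdeg, by ring,
      by linear_combination (a1*b1) * hdeg⟩
  · exact ⟨by linear_combination b1 * hdeg, by ring, by ring⟩
end

section
/- Let a,T be elements of a field of characteristic not 2 with a ≠ 0, a ≠ 1, and a^2 + a - 1 ≠ 0. Set b = ((a-1)*a*T + a^2 + a^4) / (2*(a^2 + a - 1)). Then a^4*b - a^2*b^2 - a^3 + a^2*b - a*b^2 + b^2 = 0 if and only if T^2 = a*(1+a)*(4 + a + a^2). -/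
theorem parameter_curve_substitution {K : Type*} [Field K] (hchar : (2 : K) ≠ 0)
    (a T : K) (ha0 : a ≠ 0) (ha1 : a ≠ 1) (hd : a^2 + a - 1 ≠ 0) :
    let b := ((a - 1)*a*T + a^2 + a^4) / (2*(a^2 + a - 1))
    (a^4*b - a^2*b^2 - a^3 + a^2*b - a*b^2 + b^2 = 0 ↔
      T^2 = a*(1 + a)*(4 + a + a^2)) := by
  intro b
  have hb : b = ((a - 1)*a*T + a^2 + a^4) / (2*(a^2 + a - 1)) := rfl
  clear_value b
  have h2 : (2*(a^2 + a - 1)) ≠ 0 := mul_ne_zero hchar hd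
  have h4 : (2*(2*(a^2 + a - 1))) ≠ 0 := mul_ne_zero hchar h2
  have ha1' : a - 1 ≠ 0 := sub_ne_zero.mpr ha1
  have hbD : b * (2*(a^2 + a - 1)) = (a - 1)*a*T + a^2 + a^4 :=
    by rw [hb]; exact div_mul_cancel₀ _ h2
  have key : (a^4*b - a^2*b^2 - a^3 + a^2*b - a*b^2 + b^2) * (2*(2*(a^2 + a - 1))) =
      (a - 1)^2*a^2*(a*(1 + a)*(4 + a + a^2) - T^2) := by
    linear_combination (2*(a^4 + a^2) - ((a - 1)*a*T + a^2 + a^4)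
      - 2*(a^2 + a - 1)*b) * hbD
  constructor
  · intro h
    have h0 : (a - 1)^2*a^2*(a*(1 + a)*(4 + a + a^2) - T^2) = 0 := by
      rw [← key, h, zero_mul]
    rcases mul_eq_zero.mp h0 with h' | h'
    · rcases mul_eq_zero.mp h' with h'' | h''
      · exact absurd h'' (pow_ne_zero 2 ha1')
      · exact absurd h'' (pow_ne_zero 2 ha0)
    · exact (sub_eq_zero.mp h').symm
  · intro h
    have h0 : (a^4*b - a^2*b^2 - a^3 + a^2*b - a*b^2 + b^2) * (2*(2*(a^2 + a - 1))) = 0 := by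
      rw [key, h]; ring
    exact (mul_eq_zero.mp h0).resolve_right h4
end
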